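/- Let z₀ ∈ ℂ \ {0} and let (αₙ)ₙ≥₀ be a sequence of complex numbers with |αₙ − z₀| ≤ |z₀|/2 for all n. Suppose (uₙ) is a sequence in ℂ satisfying u_{n+1} = uₙ − αₙ + εₙ where |εₙ| ≤ M/|uₙ| for some constant M. Then there exists K > 0 such that if Re(u₀ · conj(z₀)) < −K, then Re(uₙ · conj(z₀)) < −K for all n and |uₙ| → ∞. -/

import Mathlib

/-- escape estimate.  If `|αₙ − z₀| ≤ |z₀|/2` for all `n`, and `(uₙ)`
satisfies `u_{n+1} = uₙ − αₙ + εₙ` with `|εₙ| ≤ M/|uₙ|`, then there is `K > 0` such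
that `Re(u₀ conj z₀) < −K` implies `Re(uₙ conj z₀) < −K` for all `n` and `|uₙ| → ∞`. -/
theorem stmt2 (z₀ : ℂ) (hz₀ : z₀ ≠ 0) (α : ℕ → ℂ)
    (hα : ∀ n, ‖α n - z₀‖ ≤ ‖z₀‖ / 2) (M : ℝ) :
    ∃ K > 0, ∀ u : ℕ → ℂ,
      (∀ n, ∃ ε : ℂ, u (n + 1) = u n - α n + ε ∧
        ‖ε‖ ≤ M / ‖u n‖) →
      (u 0 * (starRingEnd ℂ) z₀).re < -K →
      (∀ n, (u n * (starRingEnd ℂ) z₀).re < -K) ∧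
      Filter.Tendsto (fun n => ‖u n‖) Filter.atTop Filter.atTop := by
  set r := ‖z₀‖ with hrdef
  have hr : 0 < r := norm_pos_iff.mpr hz₀
  set K : ℝ := 4 * |M| + 1 with hKdef
  have hK0 : 0 < K := by positivity
  refine ⟨K, hK0, fun u hu h0 => ?_⟩
  have hαRe : ∀ n, r ^ 2 / 2 ≤ (α n * (starRingEnd ℂ) z₀).re := by
    intro n
    have h1 : α n * (starRingEnd ℂ) z₀
        = (α n - z₀) * (starRingEnd ℂ) z₀ + z₀ * (starRingEnd ℂ) z₀ := by ring
    have h2 : (z₀ * (starRingEnd ℂ) z₀).re = r ^ 2 := by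
      rw [Complex.mul_conj]
      simp [Complex.normSq_eq_norm_sq]
      rw [← Complex.ofReal_pow, Complex.ofReal_re]
    have h3 : |((α n - z₀) * (starRingEnd ℂ) z₀).re| ≤ r / 2 * r := by
      calc |((α n - z₀) * (starRingEnd ℂ) z₀).re|
          ≤ ‖(α n - z₀) * (starRingEnd ℂ) z₀‖ := Complex.abs_re_le_norm _
        _ = ‖α n - z₀‖ * r := by rw [norm_mul, Complex.norm_conj]
        _ ≤ r / 2 * r := by
            apply mul_le_mul_of_nonneg_right (hα n) hr.le
    have h4 : -(r / 2 * r) ≤ ((α n - z₀) * (starRingEnd ℂ) z₀).re := neg_abs_le _ |>.trans' (by linarith [abs_nonneg (((α n - z₀) * (starRingEnd ℂ) z₀).re)])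
    have h5 := neg_abs_le (((α n - z₀) * (starRingEnd ℂ) z₀).re)
    rw [h1, Complex.add_re, h2]
    nlinarith [h3, h5, abs_nonneg (((α n - z₀) * (starRingEnd ℂ) z₀).re)]
  have key : ∀ n, (u n * (starRingEnd ℂ) z₀).re < -K →
      (u (n + 1) * (starRingEnd ℂ) z₀).re ≤ (u n * (starRingEnd ℂ) z₀).re - r ^ 2 / 4 := by
    intro n hn
    obtain ⟨ε, heq, hε⟩ := hu n
    have h2 : |(u n * (starRingEnd ℂ) z₀).re| ≤ ‖u n‖ * r := by
      calc |(u n * (starRingEnd ℂ) z₀).re|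
          ≤ ‖u n * (starRingEnd ℂ) z₀‖ := Complex.abs_re_le_norm _
        _ = ‖u n‖ * r := by rw [norm_mul, Complex.norm_conj]
    have h1 : K < |(u n * (starRingEnd ℂ) z₀).re| := by
      rw [abs_of_neg (by linarith)]; linarith
    have habs : K / r < ‖u n‖ := by
      rw [div_lt_iff₀ hr]; linarith
    have hun : 0 < ‖u n‖ := lt_trans (div_pos hK0 hr) habs
    have hεb : ‖ε‖ ≤ |M| * r / K := by
      calc ‖ε‖ ≤ M / ‖u n‖ := hε
        _ ≤ |M| / (K / r) := by
            apply div_le_div₀ (abs_nonneg M) (le_abs_self M) (div_pos hK0 hr) habs.le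
        _ = |M| * r / K := by field_simp
    have hεr : (ε * (starRingEnd ℂ) z₀).re ≤ r ^ 2 / 4 := by
      have h6 : (ε * (starRingEnd ℂ) z₀).re ≤ ‖ε‖ * r := by
        calc (ε * (starRingEnd ℂ) z₀).re ≤ |(ε * (starRingEnd ℂ) z₀).re| := le_abs_self _
          _ ≤ ‖ε * (starRingEnd ℂ) z₀‖ := Complex.abs_re_le_norm _
          _ = ‖ε‖ * r := by rw [norm_mul, Complex.norm_conj]
      have h7 : |M| * r / K * r ≤ r ^ 2 / 4 := by
        rw [div_mul_eq_mul_div, div_le_iff₀ hK0]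
        nlinarith [abs_nonneg M, sq_nonneg r]
      nlinarith [hεb, hr.le]
    have heqre : (u (n + 1) * (starRingEnd ℂ) z₀).re
        = (u n * (starRingEnd ℂ) z₀).re - (α n * (starRingEnd ℂ) z₀).re
          + (ε * (starRingEnd ℂ) z₀).re := by
      rw [heq]; ring_nf; simp [Complex.add_re, Complex.sub_re, sub_mul, add_mul]
    rw [heqre]
    linarith [hαRe n]
  have hmono : ∀ n, (u n * (starRingEnd ℂ) z₀).re < -K ∧
      (u n * (starRingEnd ℂ) z₀).re ≤ (u 0 * (starRingEnd ℂ) z₀).re - n * (r ^ 2 / 4) := by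
    intro n
    induction n with
    | zero => exact ⟨h0, by simp⟩
    | succ n ih =>
      have hstep := key n ih.1
      refine ⟨by nlinarith [hr], ?_⟩
      push_cast
      linarith [ih.2]
  refine ⟨fun n => (hmono n).1, ?_⟩
  have hg : Filter.Tendsto (fun n : ℕ => (n : ℝ) * (r / 4)
      - (u 0 * (starRingEnd ℂ) z₀).re / r) Filter.atTop Filter.atTop := by
    simp only [sub_eq_add_neg]
    exact Filter.tendsto_atTop_add_const_right _ _
      (Filter.Tendsto.atTop_mul_const (by positivity) tendsto_natCast_atTop_atTop)
  apply Filter.tendsto_atTop_mono _ hg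
  intro n
  have h2 : |(u n * (starRingEnd ℂ) z₀).re| ≤ ‖u n‖ * r := by
    calc |(u n * (starRingEnd ℂ) z₀).re|
        ≤ ‖u n * (starRingEnd ℂ) z₀‖ := Complex.abs_re_le_norm _
      _ = ‖u n‖ * r := by rw [norm_mul, Complex.norm_conj]
  have h3 := (hmono n).2
  have h4 : -(u n * (starRingEnd ℂ) z₀).re ≤ ‖u n‖ * r := by
    have := neg_abs_le ((u n * (starRingEnd ℂ) z₀).re); linarith
  rw [← mul_le_mul_iff_of_pos_right hr]
  have hid : ((n : ℝ) * (r / 4) - (u 0 * (starRingEnd ℂ) z₀).re / r) * r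
      = (n : ℝ) * (r ^ 2 / 4) - (u 0 * (starRingEnd ℂ) z₀).re := by
    field_simp
  rw [hid]
  linarith
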